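/- Let T be a piece type closed under submoves. Let V, B be disjoint sets of locations and V′, B′ be disjoint sets of locations with V ⊆ V′ and B′ ⊆ B. If there is a directed walk from ℓ₀ to ℓ₁ in ICG(V, B), then there is also a directed walk from ℓ₀ to ℓ₁ in ICG(V′, B′). -/

import Mathlib

/-- A move ⟨ℓ₀, ℓ₁, …, ℓ_k⟩ (k ≥ 1): source ℓ₀, intermediate locations, destination ℓ_k. -/
structure ChessMove (α : Type*) where
  src : α
  mid : List α
  dst : α

/-- The full sequence of locations of a move. -/
def ChessMove.toList {α : Type*} (m : ChessMove α) : List α :=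
  m.src :: (m.mid ++ [m.dst])

/-- A piece type is closed under submoves if every contiguous subsequence (of length ≥ 2,
which is automatic for a `ChessMove`) of a move is again a move of that type. -/
def ClosedUnderSubmoves {α : Type*} (T : Set (ChessMove α)) : Prop :=
  ∀ m ∈ T, ∀ m' : ChessMove α, m'.toList <:+: m.toList → m' ∈ T

/-- A piece type is symmetric if it is closed under reversal of moves. -/
def SymmetricType {α : Type*} (T : Set (ChessMove α)) : Prop :=
  ∀ m ∈ T, (⟨m.dst, m.mid.reverse, m.src⟩ : ChessMove α) ∈ T

/-- A move is valid in position `P` if its source and destination are occupied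
and its intermediate locations are empty. -/
def MoveValid {α : Type*} (P : Set α) (m : ChessMove α) : Prop :=
  m.src ∈ P ∧ m.dst ∈ P ∧ ∀ x ∈ m.mid, x ∉ P

/-- Executing a move empties its source location. -/
def execMove {α : Type*} (P : Set α) (m : ChessMove α) : Set α := P \ {m.src}

/-- A sequence of moves is valid from position `P` if each move is valid in the position
obtained by executing all previous moves. -/
def ValidSeq {α : Type*} : Set α → List (ChessMove α) → Prop
  | _, [] => True
  | P, m :: ms => MoveValid P m ∧ ValidSeq (execMove P m) ms

/-- The position obtained after executing all moves of a sequence. -/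
def finalPos {α : Type*} (P : Set α) (ms : List (ChessMove α)) : Set α :=
  ms.foldl execMove P

/-- A solution for piece type `T` from the fully occupied initial position with
final location `r`: a valid sequence of moves of `T` ending with only `r` occupied. -/
def IsSolution {α : Type*} (T : Set (ChessMove α)) (ms : List (ChessMove α)) (r : α) : Prop :=
  (∀ m ∈ ms, m ∈ T) ∧ ValidSeq Set.univ ms ∧ finalPos Set.univ ms = {r}

/-- Edge of the immediate capture graph ICG on the fully occupied board:
a two-location move of `T`. -/
def ICGedge {α : Type*} (T : Set (ChessMove α)) (a b : α) : Prop :=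
  (⟨a, [], b⟩ : ChessMove α) ∈ T

/-- Edge of the immediate capture graph ICG(V, B): an edge `(a, b)` for every move of `T`
from `a ∈ V` to `b ∈ V` none of whose intermediate locations is in `V ∪ B`. -/
def ICGEdge {α : Type*} (T : Set (ChessMove α)) (V B : Set α) (a b : α) : Prop :=
  a ∈ V ∧ b ∈ V ∧ ∃ m ∈ T, m.src = a ∧ m.dst = b ∧ ∀ x ∈ m.mid, x ∉ V ∪ B

/-- `H_i(p) = ICG(L ∖ {p₀, …, p_i}, {p_i})`. -/
def Hgraph {α : Type*} (T : Set (ChessMove α)) (p : ℕ → α) (i : ℕ) : α → α → Prop :=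
  ICGEdge T {x | ∀ j ≤ i, x ≠ p j} {p i}

/-- `G_i(p) = ICG(L ∖ {p₀, …, p_i}, ∅)`. -/
def Ggraph {α : Type*} (T : Set (ChessMove α)) (p : ℕ → α) (i : ℕ) : α → α → Prop :=
  ICGEdge T {x | ∀ j ≤ i, x ≠ p j} ∅

/-- A villain at `v` is strongly capturable by the hero location sequence `p₀, …, p_k`
if for some `i < k` there is a directed walk from `v` to `p_{i+1}` in `H_i(p)`. -/
def StronglyCapturable {α : Type*} (T : Set (ChessMove α)) (p : ℕ → α) (k : ℕ) (v : α) :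
    Prop :=
  ∃ i < k, Relation.ReflTransGen (Hgraph T p i) v (p (i + 1))

/-- `p₀, …, p_k` is a hero path: there are hero moves `⟨p_i, …, p_{i+1}⟩ ∈ S`,
each valid in the initial (fully occupied) position with `p₀, …, p_{i-1}` removed. -/
def HeroPath {α : Type*} (S : Set (ChessMove α)) (p : ℕ → α) (k : ℕ) : Prop :=
  ∀ i < k, ∃ mid : List α, (⟨p i, mid, p (i + 1)⟩ : ChessMove α) ∈ S ∧
    MoveValid {x | ∀ j < i, x ≠ p j} ⟨p i, mid, p (i + 1)⟩

/-- A villain at `v` is weakly capturable after the hero path `p₀, …, p_k` if some hero path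
extending it ends at a location reachable from `v` by a directed walk in `G_k(p)`. -/
def WeaklyCapturable {α : Type*} (S T : Set (ChessMove α)) (p : ℕ → α) (k : ℕ) (v : α) :
    Prop :=
  ∃ (k' : ℕ) (q : ℕ → α), k ≤ k' ∧ (∀ i ≤ k, q i = p i) ∧ HeroPath S q k' ∧
    Relation.ReflTransGen (Ggraph T p k) v (q k')

/-- A hero path `p₀, …, p_k` is `v`-interesting if the villain at `v` is not strongly
capturable by it but is weakly capturable after it. -/
def Interesting {α : Type*} (S T : Set (ChessMove α)) (p : ℕ → α) (k : ℕ) (v : α) : Prop :=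
  ¬ StronglyCapturable T p k v ∧ WeaklyCapturable S T p k v

/-- A valid sequence of hero/villain moves from position `P` with the hero at `h`:
entries tagged `true` are hero moves (from the hero's current location, in `S`),
entries tagged `false` are villain moves (in `T`, not touching the hero). -/
def HVValidSeq {α : Type*} (S T : Set (ChessMove α)) :
    Set α → α → List (Bool × ChessMove α) → Prop
  | _, _, [] => True
  | P, h, (b, m) :: ms =>
      if b then
        m ∈ S ∧ m.src = h ∧ MoveValid P m ∧ HVValidSeq S T (P \ {m.src}) m.dst ms
      else
        m ∈ T ∧ m.src ≠ h ∧ m.dst ≠ h ∧ MoveValid P m ∧ HVValidSeq S T (P \ {m.src}) h ms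

/-- The final position of a hero/villain play from the fully occupied board. -/
def hvFinalPos {α : Type*} (ms : List (Bool × ChessMove α)) : Set α :=
  ms.foldl (fun P bm => P \ {bm.2.src}) Set.univ

/-- The final hero location of a hero/villain play started with the hero at `p0`. -/
def hvFinalHero {α : Type*} (p0 : α) (ms : List (Bool × ChessMove α)) : α :=
  ms.foldl (fun h bm => if bm.1 then bm.2.dst else h) p0

/-- The subsequence of hero moves of a play. -/
def heroMoves {α : Type*} (ms : List (Bool × ChessMove α)) : List (ChessMove α) :=
  (ms.filter (fun bm => bm.1)).map (fun bm => bm.2)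

/-- A solution of the hero–villain puzzle with the hero starting at `p0`:
a valid play ending with only the hero on the board. -/
def HVSolution {α : Type*} (S T : Set (ChessMove α)) (p0 : α)
    (ms : List (Bool × ChessMove α)) : Prop :=
  HVValidSeq S T Set.univ p0 ms ∧ hvFinalPos ms = {hvFinalHero p0 ms}

/-- The hero makes exactly `k` moves, visiting the locations `p₀, p₁, …, p_k` in order. -/
def HeroFollows {α : Type*} (p : ℕ → α) (k : ℕ) (ms : List (Bool × ChessMove α)) : Prop :=
  ∃ mid : ℕ → List α,
    heroMoves ms = (List.range k).map (fun i => ⟨p i, mid i, p (i + 1)⟩)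


private lemma icg_seg {α : Type*} (T : Set (ChessMove α)) (hT : ClosedUnderSubmoves T)
    (V' B' : Set α) :
    ∀ (mid acc : List α) (a b : α),
      (⟨a, acc ++ mid, b⟩ : ChessMove α) ∈ T → a ∈ V' → b ∈ V' →
      (∀ x ∈ acc, x ∉ V' ∪ B') → (∀ x ∈ mid, x ∉ B') →
      Relation.ReflTransGen (ICGEdge T V' B') a b := by
  intro mid
  induction mid with
  | nil =>
    intro acc a b hm ha hb hacc _
    exact Relation.ReflTransGen.single
      ⟨ha, hb, ⟨a, acc ++ [], b⟩, hm, rfl, rfl, by simpa using hacc⟩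
  | cons c rest ih =>
    intro acc a b hm ha hb hacc hB
    by_cases hc : c ∈ V'
    · have h1 : (⟨a, acc, c⟩ : ChessMove α) ∈ T := by
        apply hT _ hm
        exact ⟨[], rest ++ [b], by simp [ChessMove.toList]⟩
      have h2 : (⟨c, rest, b⟩ : ChessMove α) ∈ T := by
        apply hT _ hm
        exact ⟨a :: acc, [], by simp [ChessMove.toList]⟩
      have e1 : ICGEdge T V' B' a c :=
        ⟨ha, hc, ⟨a, acc, c⟩, h1, rfl, rfl, hacc⟩
      exact Relation.ReflTransGen.trans (Relation.ReflTransGen.single e1)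
        (ih [] c b (by simpa using h2) hc hb (by simp)
          (fun x hx => hB x (List.mem_cons_of_mem _ hx)))
    · have hm' : (⟨a, (acc ++ [c]) ++ rest, b⟩ : ChessMove α) ∈ T := by
        simpa [List.append_assoc] using hm
      refine ih (acc ++ [c]) a b hm' ha hb ?_
        (fun x hx => hB x (List.mem_cons_of_mem _ hx))
      intro x hx
      rcases List.mem_append.1 hx with hx | hx
      · exact hacc x hx
      · simp only [List.mem_singleton] at hx
        subst hx
        intro h
        rcases h with h | h
        · exact hc h
        · exact hB x List.mem_cons_self h

/-- Directed walks in `ICG(V, B)` extend to directed walks in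
`ICG(V', B')` whenever `V ⊆ V'` and `B' ⊆ B`. -/
theorem icg_walk_subset {α : Type*} [Fintype α] [DecidableEq α]
    (T : Set (ChessMove α)) (hT : ClosedUnderSubmoves T)
    (V B V' B' : Set α) (hVB : Disjoint V B) (hVB' : Disjoint V' B')
    (hV : V ⊆ V') (hB : B' ⊆ B) (a b : α)
    (hwalk : Relation.ReflTransGen (ICGEdge T V B) a b) :
    Relation.ReflTransGen (ICGEdge T V' B') a b := by
  induction hwalk with
  | refl => exact Relation.ReflTransGen.refl
  | tail _ hedge ih =>
    rcases hedge with ⟨hx, hy, m, hm, hsrc, hdst, hmid⟩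
    refine ih.trans (icg_seg T hT V' B' m.mid [] _ _ ?_ (hV hx) (hV hy) (by simp) ?_)
    · subst hsrc hdst; exact hm
    · intro z hz hz'
      exact hmid z hz (Or.inr (hB hz'))
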